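/- Let R₁, …, R_m be scalable relations with R_j ⊆ ℚ^{k_j}. Let V be a finite set of variables and consider a finite list of constraints, the l-th constraint being given by an index j(l) and a map σ_l : {1,…,k_{j(l)}} → V. If there exists s : V → ℚ with (s(σ_l(1)),…,s(σ_l(k_{j(l)}))) ∈ R_{j(l)} for every l, then there exists s' : V → ℚ taking only integer values (for every v ∈ V there is n ∈ ℤ with s'(v) = n) with (s'(σ_l(1)),…,s'(σ_l(k_{j(l)}))) ∈ R_{j(l)} for every l. -/

import Mathlib

/-- A relation R ⊆ ℚ^k is scalable if for every x ∈ R there is a rational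
A > 0 such that a•x ∈ R for all rational a ≥ A. -/
def Scalable {k : ℕ} (R : Set (Fin k → ℚ)) : Prop :=
  ∀ x ∈ R, ∃ A : ℚ, 0 < A ∧ ∀ a : ℚ, A ≤ a → a • x ∈ R

lemma den_dvd_int_mul (q : ℚ) (n : ℕ) (hd : q.den ∣ n) : ∃ z : ℤ, (n : ℚ) * q = z := by
  obtain ⟨c, hc⟩ := hd
  refine ⟨c * q.num, ?_⟩
  have hden : (q.den : ℚ) ≠ 0 := by exact_mod_cast q.den_ne_zero
  have key : (q.den : ℚ) * q = q.num := by
    rw [mul_comm]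
    nth_rewrite 1 [← Rat.num_div_den q]
    exact div_mul_cancel₀ _ hden
  rw [hc]
  push_cast
  rw [mul_comm (q.den : ℚ) c, mul_assoc, key]

/-- Every satisfiable CSP instance over scalable relations has an integer
solution. -/
theorem stmt18 {m : ℕ} (k : Fin m → ℕ) (R : (j : Fin m) → Set (Fin (k j) → ℚ))
    (hR : ∀ j, Scalable (R j))
    (V : Type) [Fintype V] (L : ℕ) (idx : Fin L → Fin m)
    (σ : (l : Fin L) → Fin (k (idx l)) → V)
    (h : ∃ s : V → ℚ, ∀ l, (fun i => s (σ l i)) ∈ R (idx l)) :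
    ∃ s' : V → ℚ, (∀ v, ∃ z : ℤ, s' v = z) ∧
      ∀ l, (fun i => s' (σ l i)) ∈ R (idx l) := by
  obtain ⟨s, hs⟩ := h
  choose A hA0 hA using fun l => hR (idx l) _ (hs l)
  set d : ℕ := ∏ v : V, (s v).den with hd
  have hd1 : 1 ≤ d := Nat.one_le_iff_ne_zero.mpr (Finset.prod_ne_zero_iff.mpr
    fun v _ => (s v).den_ne_zero)
  set c : ℕ := 1 + Finset.univ.sup (fun l : Fin L => ⌈A l⌉₊) with hc
  set N : ℕ := d * c with hN
  have hN1 : 1 ≤ N := Nat.one_le_iff_ne_zero.mpr (by positivity)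
  have hNA : ∀ l, A l ≤ (N : ℚ) := by
    intro l
    have h1 : A l ≤ (⌈A l⌉₊ : ℚ) := Nat.le_ceil _
    have hsup : ⌈A l⌉₊ ≤ Finset.univ.sup (fun l : Fin L => ⌈A l⌉₊) :=
      Finset.le_sup (f := fun l : Fin L => ⌈A l⌉₊) (Finset.mem_univ l)
    have h2 : ⌈A l⌉₊ ≤ N := by
      calc ⌈A l⌉₊ ≤ c := by rw [hc]; omega
        _ ≤ d * c := Nat.le_mul_of_pos_left _ hd1
    exact h1.trans (by exact_mod_cast h2)
  refine ⟨fun v => (N : ℚ) * s v, ?_, ?_⟩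
  · intro v
    exact den_dvd_int_mul (s v) N (dvd_mul_of_dvd_left
      (Finset.dvd_prod_of_mem _ (Finset.mem_univ v)) c)
  · intro l
    have := hA l (N : ℚ) (hNA l)
    convert this using 1
    rfl
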